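/- arXiv:1309.7676 — 4 statements merged into one kernel-verified Lean document; each statement's English description precedes it below -/
import Mathlib

section
/- If a labeled dataset T is separable with margin δ > 0 and has radius at most R under a feature map φ, then the multiclass perceptron algorithm run on T updates its weight vector at most R²/δ² times. -/
open Finset Filter
open scoped RealInnerProductSpace

noncomputable section

/-- Points in `ℝ^d`. -/
abbrev Pt (d : ℕ) := EuclideanSpace ℝ (Fin d)

variable {d : ℕ}

/-- `q` is the unique nearest neighbor (by Euclidean distance) of `x` in `P`. -/
def IsNN {C : Type*} (P : Finset (Pt d × C)) (x : Pt d) (q : Pt d × C) : Prop :=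
  q ∈ P ∧ ∀ r ∈ P, r ≠ q → dist x q.1 < dist x r.1

/-- `p` is misclassified by the nearest-neighbor rule of prototype set `P`
(in particular when `P = ∅`, where the rule is undefined). -/
def Misclassified {C : Type*} (P : Finset (Pt d × C)) (p : Pt d × C) : Prop :=
  P = ∅ ∨ ∃ q, IsNN P p.1 q ∧ q.2 ≠ p.2

/-- One step of the CNN algorithm: some point of `T` misclassified by `P` is added. -/
def CNNStep {C : Type*} [DecidableEq C] [DecidableEq (Pt d)]
    (T P P' : Finset (Pt d × C)) : Prop :=
  ∃ p ∈ T, Misclassified P p ∧ P' = insert p P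

/-- `w` is a restricted vector corresponding to `P ⊆ T`:
`w = Σ_{(x,c)∈P} (φ(x,c) − φ(x,o(x)))` for some `o` with `o x ≠ c` for all `(x,c) ∈ T`. -/
def Restricted {C H : Type*} [NormedAddCommGroup H] [InnerProductSpace ℝ H]
    (φ : Pt d → C → H) (T P : Finset (Pt d × C)) (w : H) : Prop :=
  ∃ o : Pt d → C, (∀ p ∈ T, o p.1 ≠ p.2) ∧
    w = ∑ p ∈ P, (φ p.1 p.2 - φ p.1 (o p.1))

/-- `φ` is neighborly w.r.t. `T`: for every `P ⊆ T`, every restricted `w` corresponding to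
`P`, and every training point, `argmax_y ⟪w, φ x y⟫` is the class of the nearest neighbor
of `x` in `P`. -/
def Neighborly {C H : Type*} [NormedAddCommGroup H] [InnerProductSpace ℝ H]
    (φ : Pt d → C → H) (T : Finset (Pt d × C)) : Prop :=
  ∀ P ⊆ T, ∀ w : H, Restricted φ T P w → ∀ p ∈ T, ∀ q, IsNN P p.1 q →
    ∀ y, y ≠ q.2 → ⟪w, φ p.1 y⟫ < ⟪w, φ p.1 q.2⟫

/-- If `T` is separable with margin `δ > 0` and has radius at most `R` under
`φ`, then any run of the multiclass perceptron makes at most `R²/δ²` updates. -/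
theorem perceptron_mistake_bound {C H : Type*} [NormedAddCommGroup H] [InnerProductSpace ℝ H]
    (φ : Pt d → C → H) (T : Finset (Pt d × C)) (δ R : ℝ) (hδ : 0 < δ)
    (hmargin : ∃ wstar : H, ‖wstar‖ = 1 ∧
      ∀ p ∈ T, ∀ y, y ≠ p.2 → δ ≤ ⟪wstar, φ p.1 p.2 - φ p.1 y⟫)
    (hradius : ∀ p ∈ T, ∀ y, y ≠ p.2 → ‖φ p.1 p.2 - φ p.1 y‖ ≤ R)
    (k : ℕ) (w : ℕ → H) (hw0 : w 0 = 0)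
    (hupd : ∀ i < k, ∃ p ∈ T, ∃ y, y ≠ p.2 ∧
      (∀ y', ⟪w i, φ p.1 y'⟫ ≤ ⟪w i, φ p.1 y⟫) ∧
      w (i + 1) = w i + φ p.1 p.2 - φ p.1 y) :
    (k : ℝ) ≤ R ^ 2 / δ ^ 2 := by
  rcases hmargin with ⟨wstar, hws, hm⟩
  rcases Nat.eq_zero_or_pos k with rfl | hk
  · simp [div_nonneg (sq_nonneg R) (sq_nonneg δ)]
  -- R ≥ 0
  obtain ⟨p0, hp0, y0, hy0, _, _⟩ := hupd 0 hk
  have hR : 0 ≤ R := le_trans (norm_nonneg _) (hradius p0 hp0 y0 hy0)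
  -- key invariants
  have key : ∀ n ≤ k, (n : ℝ) * δ ≤ ⟪wstar, w n⟫ ∧ ‖w n‖ ^ 2 ≤ n * R ^ 2 := by
    intro n hn
    induction n with
    | zero => simp [hw0]
    | succ m ih =>
      obtain ⟨hA, hB⟩ := ih (le_trans (Nat.le_succ m) hn)
      obtain ⟨p, hp, y, hy, hmax, hwm⟩ := hupd m (lt_of_lt_of_le (Nat.lt_succ_self m) hn)
      have hwm' : w (m + 1) = w m + (φ p.1 p.2 - φ p.1 y) := by
        rw [hwm]; abel
      constructor
      · rw [hwm', inner_add_right]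
        push_cast
        have := hm p hp y hy
        nlinarith
      · have hnorm : ‖w (m+1)‖ ^ 2 =
            ‖w m‖ ^ 2 + 2 * ⟪w m, φ p.1 p.2 - φ p.1 y⟫ + ‖φ p.1 p.2 - φ p.1 y‖ ^ 2 := by
          rw [hwm']
          rw [@norm_add_sq_real]
        have h1 : ⟪w m, φ p.1 p.2 - φ p.1 y⟫ ≤ 0 := by
          rw [inner_sub_right]
          linarith [hmax p.2]
        have h2 : ‖φ p.1 p.2 - φ p.1 y‖ ^ 2 ≤ R ^ 2 := by
          have := hradius p hp y hy
          nlinarith [norm_nonneg (φ p.1 p.2 - φ p.1 y)]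
        push_cast
        rw [hnorm]
        push_cast at hB
        linarith
  obtain ⟨hA, hB⟩ := key k le_rfl
  have hcs : ⟪wstar, w k⟫ ≤ ‖w k‖ := by
    calc ⟪wstar, w k⟫ ≤ ‖wstar‖ * ‖w k‖ := real_inner_le_norm _ _
    _ = ‖w k‖ := by rw [hws, one_mul]
  have hkδ : (k : ℝ) * δ ≤ ‖w k‖ := le_trans hA hcs
  have hsq : ((k : ℝ) * δ) ^ 2 ≤ (k : ℝ) * R ^ 2 := by
    have h0 : 0 ≤ (k:ℝ) * δ := by positivity
    nlinarith [norm_nonneg (w k)]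
  have hkpos : (0:ℝ) < k := by exact_mod_cast hk
  rw [le_div_iff₀ (by positivity)]
  nlinarith
end
end

section
/- Let ψ_σ be the Gaussian kernel feature map with ψ_σ(x)·ψ_σ(x') = exp(−‖x−x'‖²/(2σ²)), and define φ_σ(x,c) by interleaving the coordinates of ψ_σ(x) into the slots indexed by class c so that φ_σ(x,c)·φ_σ(x',c') = 1[c=c']·exp(−‖x−x'‖²/(2σ²)). Then for any fixed subset P ⊆ T, any restricted w corresponding to P, and any (x',c') ∈ T, there exists σ* > 0 such that for all 0 < σ < σ*, argmax_{y∈C} w·φ_σ(x',y) = C_P(x'). -/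
set_option maxHeartbeats 800000


open Finset Filter
open scoped RealInnerProductSpace

noncomputable section

variable {d : ℕ}

/-- For the class-interleaved Gaussian feature maps `φ σ`, for any fixed
`P ⊆ T`, restricted `w` corresponding to `P`, and training point `(x', c') ∈ T`, there is a
`σ* > 0` such that for all `0 < σ < σ*`, `argmax_y ⟪w, φ σ x' y⟫ = C_P(x')`. -/
theorem gaussian_restricted_argmax {C H : Type*} [DecidableEq C]
    [NormedAddCommGroup H] [InnerProductSpace ℝ H]
    (φ : ℝ → Pt d → C → H)
    (hker : ∀ σ : ℝ, 0 < σ → ∀ x x' : Pt d, ∀ c c' : C,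
      ⟪φ σ x c, φ σ x' c'⟫ =
        (if c = c' then (1 : ℝ) else 0) * Real.exp (-‖x - x'‖ ^ 2 / (2 * σ ^ 2)))
    (T P : Finset (Pt d × C)) (hPT : P ⊆ T)
    (o : Pt d → C) (ho : ∀ p ∈ T, o p.1 ≠ p.2)
    (x' : Pt d) (c' : C) (hx' : (x', c') ∈ T)
    (q : Pt d × C) (hq : IsNN P x' q) :
    ∃ σstar > (0 : ℝ), ∀ σ : ℝ, 0 < σ → σ < σstar → ∀ y, y ≠ q.2 →
      ⟪∑ p ∈ P, (φ σ p.1 p.2 - φ σ p.1 (o p.1)), φ σ x' y⟫ <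
      ⟪∑ p ∈ P, (φ σ p.1 p.2 - φ σ p.1 (o p.1)), φ σ x' q.2⟫ := by
  classical
  obtain ⟨hqP, hnear⟩ := hq
  have hoq : o q.1 ≠ q.2 := ho q (hPT hqP)
  -- key inner product formula
  have key : ∀ σ : ℝ, 0 < σ → ∀ y : C,
      ⟪∑ p ∈ P, (φ σ p.1 p.2 - φ σ p.1 (o p.1)), φ σ x' y⟫
      = ∑ p ∈ P, (((if p.2 = y then (1:ℝ) else 0) - (if o p.1 = y then 1 else 0))
          * Real.exp (-‖p.1 - x'‖ ^ 2 / (2 * σ ^ 2))) := by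
    intro σ hσ y
    rw [sum_inner]
    refine Finset.sum_congr rfl fun p hp => ?_
    rw [inner_sub_left, hker σ hσ, hker σ hσ, sub_mul]
  -- positivity of distance gaps
  have hΔ : ∀ p ∈ P.erase q, 0 < ‖p.1 - x'‖ ^ 2 - ‖q.1 - x'‖ ^ 2 := by
    intro p hp
    have hlt := hnear p (Finset.mem_of_mem_erase hp) (Finset.ne_of_mem_erase hp)
    have h1 : ‖q.1 - x'‖ < ‖p.1 - x'‖ := by
      rw [← dist_eq_norm, ← dist_eq_norm, dist_comm q.1, dist_comm p.1]; exact hlt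
    nlinarith [norm_nonneg (q.1 - x'), norm_nonneg (p.1 - x')]
  -- tendsto statement for the ratio sum
  have htend : Tendsto
      (fun σ : ℝ => ∑ p ∈ P.erase q,
        2 * Real.exp (-(‖p.1 - x'‖ ^ 2 - ‖q.1 - x'‖ ^ 2) / (2 * σ ^ 2)))
      (nhdsWithin 0 (Set.Ioi 0)) (nhds 0) := by
    have h0 : (0:ℝ) = ∑ p ∈ P.erase q, (0:ℝ) := by simp
    rw [h0]
    refine tendsto_finset_sum _ fun p hp => ?_
    have hsq : Tendsto (fun σ:ℝ => 2 * σ ^ 2) (nhdsWithin 0 (Set.Ioi 0))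
        (nhdsWithin 0 (Set.Ioi 0)) := by
      apply tendsto_nhdsWithin_of_tendsto_nhds_of_eventually_within
      · have hc : Continuous (fun σ:ℝ => 2 * σ ^ 2) := continuous_const.mul (continuous_pow 2)
        have h := hc.tendsto (0:ℝ)
        simpa using h.mono_left nhdsWithin_le_nhds
      · filter_upwards [self_mem_nhdsWithin] with σ hσ
        have hσ' : (0:ℝ) < σ := hσ
        have : (0:ℝ) < 2 * σ ^ 2 := by positivity
        exact this
    have hinv : Tendsto (fun σ:ℝ => (2 * σ ^ 2)⁻¹) (nhdsWithin 0 (Set.Ioi 0)) atTop :=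
      hsq.inv_tendsto_nhdsGT_zero
    have hmul : Tendsto (fun σ:ℝ => (‖p.1 - x'‖ ^ 2 - ‖q.1 - x'‖ ^ 2) * (2 * σ ^ 2)⁻¹)
        (nhdsWithin 0 (Set.Ioi 0)) atTop := hinv.const_mul_atTop (hΔ p hp)
    have hneg : Tendsto (fun σ:ℝ => -(‖p.1 - x'‖ ^ 2 - ‖q.1 - x'‖ ^ 2) / (2 * σ ^ 2))
        (nhdsWithin 0 (Set.Ioi 0)) atBot := by
      have h := tendsto_neg_atTop_atBot.comp hmul
      exact h.congr fun σ => by simp only [Function.comp_apply]; ring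
    have hexp := Real.tendsto_exp_atBot.comp hneg
    have : Tendsto (fun σ:ℝ =>
        2 * Real.exp (-(‖p.1 - x'‖ ^ 2 - ‖q.1 - x'‖ ^ 2) / (2 * σ ^ 2)))
        (nhdsWithin 0 (Set.Ioi 0)) (nhds (2 * 0)) := hexp.const_mul 2
    simpa using this
  have hev : ∀ᶠ σ in nhdsWithin 0 (Set.Ioi 0),
      (∑ p ∈ P.erase q,
        2 * Real.exp (-(‖p.1 - x'‖ ^ 2 - ‖q.1 - x'‖ ^ 2) / (2 * σ ^ 2))) < 1 :=
    htend.eventually_lt_const one_pos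
  rw [eventually_iff, mem_nhdsGT_iff_exists_Ioo_subset] at hev
  obtain ⟨σstar, hσstar, hsub⟩ := hev
  refine ⟨σstar, hσstar, ?_⟩
  intro σ hσpos hσlt y hy
  have hsum : (∑ p ∈ P.erase q,
      2 * Real.exp (-(‖p.1 - x'‖ ^ 2 - ‖q.1 - x'‖ ^ 2) / (2 * σ ^ 2))) < 1 :=
    hsub ⟨hσpos, hσlt⟩
  rw [key σ hσpos y, key σ hσpos q.2, ← sub_pos, ← Finset.sum_sub_distrib]
  set E : Pt d × C → ℝ := fun p => Real.exp (-‖p.1 - x'‖ ^ 2 / (2 * σ ^ 2)) with hE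
  have hEpos : ∀ p, 0 < E p := fun p => Real.exp_pos _
  -- rewrite each term
  have hterm : ∀ p, ((if p.2 = q.2 then (1:ℝ) else 0) - (if o p.1 = q.2 then 1 else 0)) * E p
      - ((if p.2 = y then (1:ℝ) else 0) - (if o p.1 = y then 1 else 0)) * E p
      = (((if p.2 = q.2 then (1:ℝ) else 0) - (if o p.1 = q.2 then 1 else 0))
        - ((if p.2 = y then (1:ℝ) else 0) - (if o p.1 = y then 1 else 0))) * E p := by
    intro p; ring
  -- split off q
  rw [← Finset.add_sum_erase _ _ hqP]
  -- bound term at q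
  have hq2 : ((if q.2 = q.2 then (1:ℝ) else 0) - (if o q.1 = q.2 then 1 else 0)) * E q
      - ((if q.2 = y then (1:ℝ) else 0) - (if o q.1 = y then 1 else 0)) * E q ≥ E q := by
    have hc : (((if q.2 = q.2 then (1:ℝ) else 0) - (if o q.1 = q.2 then 1 else 0))
        - ((if q.2 = y then (1:ℝ) else 0) - (if o q.1 = y then 1 else 0))) ≥ 1 := by
      simp only [if_pos rfl, if_neg hoq, if_neg (Ne.symm hy)]
      split_ifs <;> norm_num
    calc ((if q.2 = q.2 then (1:ℝ) else 0) - (if o q.1 = q.2 then 1 else 0)) * E q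
        - ((if q.2 = y then (1:ℝ) else 0) - (if o q.1 = y then 1 else 0)) * E q
        = (((if q.2 = q.2 then (1:ℝ) else 0) - (if o q.1 = q.2 then 1 else 0))
          - ((if q.2 = y then (1:ℝ) else 0) - (if o q.1 = y then 1 else 0))) * E q := by ring
      _ ≥ 1 * E q := by
          exact mul_le_mul_of_nonneg_right hc (le_of_lt (hEpos q))
      _ = E q := one_mul _
  -- bound the rest
  have hrest : ∀ p ∈ P.erase q,
      -(2 * E p) ≤ ((if p.2 = q.2 then (1:ℝ) else 0) - (if o p.1 = q.2 then 1 else 0)) * E p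
      - ((if p.2 = y then (1:ℝ) else 0) - (if o p.1 = y then 1 else 0)) * E p := by
    intro p hp
    have hc : (-2:ℝ) ≤ (((if p.2 = q.2 then (1:ℝ) else 0) - (if o p.1 = q.2 then 1 else 0))
        - ((if p.2 = y then (1:ℝ) else 0) - (if o p.1 = y then 1 else 0))) := by
      split_ifs <;> norm_num
    calc -(2 * E p) = (-2) * E p := by ring
      _ ≤ (((if p.2 = q.2 then (1:ℝ) else 0) - (if o p.1 = q.2 then 1 else 0))
          - ((if p.2 = y then (1:ℝ) else 0) - (if o p.1 = y then 1 else 0))) * E p :=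
        mul_le_mul_of_nonneg_right hc (le_of_lt (hEpos p))
      _ = _ := by ring
  have hrest' : -(∑ p ∈ P.erase q, 2 * E p)
      ≤ ∑ p ∈ P.erase q, (((if p.2 = q.2 then (1:ℝ) else 0) - (if o p.1 = q.2 then 1 else 0)) * E p
        - ((if p.2 = y then (1:ℝ) else 0) - (if o p.1 = y then 1 else 0)) * E p) := by
    rw [← Finset.sum_neg_distrib]
    exact Finset.sum_le_sum hrest
  -- the key smallness bound
  have hEfac : ∀ p : Pt d × C, E p
      = E q * Real.exp (-(‖p.1 - x'‖ ^ 2 - ‖q.1 - x'‖ ^ 2) / (2 * σ ^ 2)) := by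
    intro p
    show Real.exp (-‖p.1 - x'‖ ^ 2 / (2 * σ ^ 2))
      = Real.exp (-‖q.1 - x'‖ ^ 2 / (2 * σ ^ 2))
        * Real.exp (-(‖p.1 - x'‖ ^ 2 - ‖q.1 - x'‖ ^ 2) / (2 * σ ^ 2))
    rw [← Real.exp_add]
    congr 1
    have hs : (2 * σ ^ 2) ≠ 0 := by positivity
    field_simp
    ring
  have hsmall : (∑ p ∈ P.erase q, 2 * E p) < E q := by
    have : (∑ p ∈ P.erase q, 2 * E p)
        = E q * ∑ p ∈ P.erase q,
            2 * Real.exp (-(‖p.1 - x'‖ ^ 2 - ‖q.1 - x'‖ ^ 2) / (2 * σ ^ 2)) := by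
      rw [Finset.mul_sum]
      refine Finset.sum_congr rfl fun p hp => ?_
      rw [hEfac p]; ring
    rw [this]
    calc E q * ∑ p ∈ P.erase q,
          2 * Real.exp (-(‖p.1 - x'‖ ^ 2 - ‖q.1 - x'‖ ^ 2) / (2 * σ ^ 2))
        < E q * 1 := by exact mul_lt_mul_of_pos_left hsum (hEpos q)
      _ = E q := mul_one _
  simp only [hE] at hq2 hrest' hsmall
  linarith [hq2, hrest', hsmall]
end
end

section
/- For any finite labeled training set T (with unique nearest neighbors and consistent labeling), there exist uncountably many values σ > 0 for which the class-interleaved Gaussian feature map φ_σ is neighborly with respect to T; in particular, there exists σ^min > 0 such that every σ ∈ (0, σ^min) yields a neighborly φ_σ. -/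
open Finset Filter
open scoped RealInnerProductSpace

noncomputable section

variable {d : ℕ}

set_option maxHeartbeats 1000000 in
/-- For any finite training set `T` (unique nearest neighbors, no conflicting
labels), there is a `σ^min > 0` such that `φ σ` is neighborly w.r.t. `T` for every
`σ ∈ (0, σ^min)`; in particular uncountably many `σ > 0` yield a neighborly `φ σ`. -/
theorem gaussian_neighborly {C H : Type*} [DecidableEq C]
    [NormedAddCommGroup H] [InnerProductSpace ℝ H]
    (φ : ℝ → Pt d → C → H)
    (hker : ∀ σ : ℝ, 0 < σ → ∀ x x' : Pt d, ∀ c c' : C,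
      ⟪φ σ x c, φ σ x' c'⟫ =
        (if c = c' then (1 : ℝ) else 0) * Real.exp (-‖x - x'‖ ^ 2 / (2 * σ ^ 2)))
    (T : Finset (Pt d × C))
    (hlabel : ∀ x : Pt d, ∀ c c' : C, (x, c) ∈ T → (x, c') ∈ T → c = c')
    (hNN : ∀ P ⊆ T, P.Nonempty → ∀ p ∈ T, ∃ q, IsNN P p.1 q) :
    (∃ σmin > (0 : ℝ), ∀ σ : ℝ, 0 < σ → σ < σmin → Neighborly (φ σ) T) ∧
    ¬ ({σ : ℝ | 0 < σ ∧ Neighborly (φ σ) T}).Countable := by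
  classical
  set F : Finset ℝ := ((T ×ˢ T ×ˢ T).filter
      (fun t => dist t.1.1 t.2.1.1 < dist t.1.1 t.2.2.1)).image
      (fun t => dist t.1.1 t.2.2.1 ^ 2 - dist t.1.1 t.2.1.1 ^ 2) with hF
  set δ : ℝ := if h : F.Nonempty then F.min' h else 1 with hδdef
  have hδpos : 0 < δ := by
    rw [hδdef]
    split_ifs with h
    · have hm := F.min'_mem h
      obtain ⟨t, htm, heq⟩ := Finset.mem_image.1 hm
      have hlt := (Finset.mem_filter.1 htm).2
      have h0 : (0:ℝ) ≤ dist t.1.1 t.2.1.1 := dist_nonneg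
      nlinarith
    · norm_num
  have hδkey : ∀ a q r : Pt d × C, a ∈ T → q ∈ T → r ∈ T →
      dist a.1 q.1 < dist a.1 r.1 →
      dist a.1 q.1 ^ 2 + δ ≤ dist a.1 r.1 ^ 2 := by
    intro a q r ha hq hr hlt
    have hmem : (dist a.1 r.1 ^ 2 - dist a.1 q.1 ^ 2) ∈ F := by
      rw [hF]
      refine Finset.mem_image.2 ⟨(a, q, r), ?_, rfl⟩
      simp [Finset.mem_filter, Finset.mem_product, ha, hq, hr, hlt]
    have hne : F.Nonempty := ⟨_, hmem⟩
    rw [hδdef, dif_pos hne]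
    have := Finset.min'_le F _ hmem
    linarith
  set n : ℝ := (T.card : ℝ) with hn
  have hn0 : 0 ≤ n := by rw [hn]; exact Nat.cast_nonneg _
  set L : ℝ := Real.log (2 * (n + 1)) + 1 with hL
  have hLpos : 0 < L := by
    have : (0:ℝ) ≤ Real.log (2 * (n + 1)) := Real.log_nonneg (by nlinarith)
    linarith
  set σmin : ℝ := Real.sqrt (δ / (2 * L)) with hσmin
  have hσminpos : 0 < σmin := Real.sqrt_pos.2 (div_pos hδpos (by linarith))
  clear_value F δ n L σmin
  have hmain : ∀ σ : ℝ, 0 < σ → σ < σmin → Neighborly (φ σ) T := by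
    intro σ hσ hσlt P hPT w hw a ha q hq y hy
    -- the key exponential smallness
    have hσ2 : σ ^ 2 < δ / (2 * L) := by
      have hσlt' : σ < Real.sqrt (δ / (2 * L)) := by rw [← hσmin]; exact hσlt
      exact (Real.lt_sqrt hσ.le).1 hσlt'
    have hη : Real.exp (-δ / (2 * σ ^ 2)) < 1 / (2 * (n + 1)) := by
      have hσ2pos : (0:ℝ) < σ ^ 2 := pow_pos hσ 2
      have h2σ : (0:ℝ) < 2 * σ ^ 2 := by linarith
      have h2L : (0:ℝ) < 2 * L := by linarith
      have h1 : Real.log (2 * (n + 1)) < δ / (2 * σ ^ 2) := by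
        rw [lt_div_iff₀ h2σ]
        have h2 : σ ^ 2 * (2 * L) < δ := by
          rw [← lt_div_iff₀ h2L]
          linarith [hσ2]
        nlinarith [hLpos]
      have h3 : Real.exp (-δ / (2 * σ ^ 2)) < Real.exp (-Real.log (2 * (n + 1))) := by
        apply Real.exp_lt_exp.2
        rw [neg_div]
        linarith
      calc Real.exp (-δ / (2 * σ ^ 2)) < Real.exp (-Real.log (2 * (n + 1))) := h3
        _ = 1 / (2 * (n + 1)) := by
            rw [Real.exp_neg, Real.exp_log (by nlinarith)]
            ring
    obtain ⟨o, ho, hwval⟩ := hw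
    obtain ⟨hqP, hqNN⟩ := hq
    have hqT : q ∈ T := hPT hqP
    set E : Pt d × C → ℝ := fun p => Real.exp (-‖p.1 - a.1‖ ^ 2 / (2 * σ ^ 2)) with hE
    have hEpos : ∀ p, 0 < E p := fun p => Real.exp_pos _
    have hinner : ∀ c : C, ⟪w, φ σ a.1 c⟫ =
        ∑ p ∈ P, (((if p.2 = c then (1:ℝ) else 0) - if o p.1 = c then 1 else 0) * E p) := by
      intro c
      rw [hwval, sum_inner]
      refine Finset.sum_congr rfl fun p _ => ?_
      rw [inner_sub_left, hker σ hσ, hker σ hσ]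
      ring
    rw [hinner, hinner, ← sub_pos, ← Finset.sum_sub_distrib]
    set g : Pt d × C → ℝ := fun p =>
      (((if p.2 = q.2 then (1:ℝ) else 0) - if o p.1 = q.2 then 1 else 0) -
       ((if p.2 = y then (1:ℝ) else 0) - if o p.1 = y then 1 else 0)) with hg
    have hsum : ∀ p, ((if p.2 = q.2 then (1:ℝ) else 0) - if o p.1 = q.2 then 1 else 0) * E p
        - ((if p.2 = y then (1:ℝ) else 0) - if o p.1 = y then 1 else 0) * E p = g p * E p := by
      intro p; rw [hg]; ring
    clear_value E g
    rw [Finset.sum_congr rfl fun p _ => hsum p]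
    -- split off the q term
    rw [← Finset.add_sum_erase P _ hqP]
    have hgq : 1 ≤ g q := by
      have h1 : o q.1 ≠ q.2 := ho q hqT
      have h2 : ¬ q.2 = y := fun h => hy h.symm
      simp only [hg, if_pos rfl, if_neg h1, if_neg h2]
      split_ifs <;> norm_num
    -- bound on the erased terms
    have hEbound : ∀ p ∈ P.erase q, E p ≤ E q * Real.exp (-δ / (2 * σ ^ 2)) := by
      intro p hp
      have hpP := Finset.mem_of_mem_erase hp
      have hpne := Finset.ne_of_mem_erase hp
      have hdlt : dist a.1 q.1 < dist a.1 p.1 := hqNN p hpP hpne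
      have hkey := hδkey a q p ha hqT (hPT hpP) hdlt
      have hq1 : ‖q.1 - a.1‖ = dist a.1 q.1 := by
        rw [dist_eq_norm, norm_sub_rev]
      have hp1 : ‖p.1 - a.1‖ = dist a.1 p.1 := by
        rw [dist_eq_norm, norm_sub_rev]
      simp only [hE, hq1, hp1]
      rw [← Real.exp_add]
      apply Real.exp_le_exp.2
      have hσ2pos : (0:ℝ) < 2 * σ ^ 2 := by nlinarith [pow_pos hσ 2]
      rw [← add_div, div_le_div_iff₀ hσ2pos hσ2pos]
      nlinarith [hkey]
    have hgbound : ∀ p, -2 ≤ g p := by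
      intro p; simp only [hg]; split_ifs <;> norm_num
    have herase : ∀ p ∈ P.erase q, -(2 * (E q * Real.exp (-δ / (2 * σ ^ 2)))) ≤ g p * E p := by
      intro p hp
      have h1 := hEbound p hp
      have h2 := hgbound p
      have h3 := (hEpos p).le
      have hx : 0 ≤ (g p + 2) * E p := mul_nonneg (by linarith) h3
      have hx2 : (g p + 2) * E p = g p * E p + 2 * E p := by ring
      have h1' : 2 * E p ≤ 2 * (E q * Real.exp (-δ / (2 * σ ^ 2))) := by linarith
      linarith
    have hcard : ((P.erase q).card : ℝ) ≤ n := by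
      rw [hn]
      exact_mod_cast Finset.card_le_card ((Finset.erase_subset _ _).trans hPT)
    have hsum_lb : -(n * (2 * (E q * Real.exp (-δ / (2 * σ ^ 2))))) ≤
        ∑ p ∈ P.erase q, g p * E p := by
      have h1 : ((P.erase q).card : ℝ) * (-(2 * (E q * Real.exp (-δ / (2 * σ ^ 2))))) ≤
          ∑ p ∈ P.erase q, g p * E p := by
        have h0 := Finset.card_nsmul_le_sum (P.erase q)
          (fun p => g p * E p) (-(2 * (E q * Real.exp (-δ / (2 * σ ^ 2))))) herase
        simpa [nsmul_eq_mul] using h0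
      have h2 : (0:ℝ) ≤ 2 * (E q * Real.exp (-δ / (2 * σ ^ 2))) := by
        have ha1 := (hEpos q).le
        have ha2 := (Real.exp_pos (-δ / (2 * σ ^ 2))).le
        nlinarith
      nlinarith [mul_le_mul_of_nonneg_right hcard h2]
    have hEq : 0 < E q := hEpos q
    have hgoal : 0 < g q * E q + ∑ p ∈ P.erase q, g p * E p := by
      have h4 : E q ≤ g q * E q := by nlinarith [hgq, hEq]
      have h5 : 0 < Real.exp (-δ / (2 * σ ^ 2)) := Real.exp_pos _
      have h2n1 : (0:ℝ) < 2 * (n + 1) := by linarith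
      have hB : Real.exp (-δ / (2 * σ ^ 2)) * (2 * (n + 1)) < 1 :=
        (lt_div_iff₀ h2n1).1 hη
      have hBB : E q * (Real.exp (-δ / (2 * σ ^ 2)) * (2 * (n + 1))) < E q * 1 :=
        mul_lt_mul_of_pos_left hB hEq
      have hu : (0:ℝ) ≤ E q * Real.exp (-δ / (2 * σ ^ 2)) :=
        mul_nonneg hEq.le h5.le
      nlinarith [hsum_lb, h4, hBB, hu]
    exact hgoal
  constructor
  · exact ⟨σmin, hσminpos, hmain⟩
  · intro hc
    have hsub : Set.Ioo (0:ℝ) σmin ⊆ {σ : ℝ | 0 < σ ∧ Neighborly (φ σ) T} := by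
      intro σ hσ
      exact ⟨hσ.1, hmain σ hσ.1 hσ.2⟩
    have hIoo : (Set.Ioo (0:ℝ) σmin).Countable := hc.mono hsub
    have := Cardinal.mk_le_aleph0_iff.2 hIoo.to_subtype
    rw [Cardinal.mk_Ioo_real hσminpos] at this
    exact (Cardinal.aleph0_lt_continuum.not_ge this)
end
end

section
/- Let P be a finite set of labeled points, x' a query point with unique nearest neighbor N_P(x') in P whose label is C_P(x'), and o a function assigning to each prototype a class different from its label. Define g_σ(y) = Σ_{(x,c)∈P}[I(c=y) − I(o(x)=y)]·exp(−‖x−x'‖²/(2σ²)). Then there exists σ* > 0 such that for all 0 < σ < σ*, g_σ(C_P(x')) > g_σ(y) for every class y ≠ C_P(x'). -/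
open Finset Filter
open scoped RealInnerProductSpace

noncomputable section

variable {d : ℕ}

/-- In the small-bandwidth limit, the Gaussian-weighted vote
`g_σ(y) = Σ_{(x,c)∈P}[I(c=y) − I(o(x)=y)]·exp(−‖x−x'‖²/(2σ²))` is maximized, uniquely
among classes, at the label `C_P(x')` of the unique nearest neighbor of `x'` in `P`,
for all sufficiently small `σ > 0`. -/
theorem small_bandwidth_vote_dominance {C : Type*} [DecidableEq C]
    (P : Finset (Pt d × C)) (x' : Pt d) (N : Pt d × C) (hN : IsNN P x' N)
    (o : Pt d → C) (ho : ∀ p ∈ P, o p.1 ≠ p.2) :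
    ∃ σstar > (0 : ℝ), ∀ σ : ℝ, 0 < σ → σ < σstar → ∀ y : C, y ≠ N.2 →
      (∑ p ∈ P, ((if p.2 = y then (1 : ℝ) else 0) - (if o p.1 = y then 1 else 0)) *
        Real.exp (-‖p.1 - x'‖ ^ 2 / (2 * σ ^ 2))) <
      (∑ p ∈ P, ((if p.2 = N.2 then (1 : ℝ) else 0) - (if o p.1 = N.2 then 1 else 0)) *
        Real.exp (-‖p.1 - x'‖ ^ 2 / (2 * σ ^ 2))) := by
  classical
  obtain ⟨hNP, hmin⟩ := hN
  have main : ∀ σ : ℝ, 0 < σ → ∀ y : C, y ≠ N.2 →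
      -(Real.exp (-‖N.1 - x'‖ ^ 2 / (2 * σ ^ 2))) <
        ∑ p ∈ P.erase N,
          ((((if p.2 = N.2 then (1:ℝ) else 0) - (if o p.1 = N.2 then 1 else 0))
            - ((if p.2 = y then (1:ℝ) else 0) - (if o p.1 = y then 1 else 0)))
           * Real.exp (-‖p.1 - x'‖ ^ 2 / (2 * σ ^ 2))) →
      (∑ p ∈ P, ((if p.2 = y then (1 : ℝ) else 0) - (if o p.1 = y then 1 else 0)) *
        Real.exp (-‖p.1 - x'‖ ^ 2 / (2 * σ ^ 2))) <
      (∑ p ∈ P, ((if p.2 = N.2 then (1 : ℝ) else 0) - (if o p.1 = N.2 then 1 else 0)) *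
        Real.exp (-‖p.1 - x'‖ ^ 2 / (2 * σ ^ 2))) := by
    intro σ hσ y hy hb
    rw [← sub_pos, ← Finset.sum_sub_distrib]
    simp only [← sub_mul]
    rw [← Finset.add_sum_erase _ _ hNP]
    have h1 : o N.1 ≠ N.2 := ho N hNP
    have h2 : N.2 ≠ y := fun h => hy h.symm
    have hcN : (1:ℝ) ≤ ((if N.2 = N.2 then (1:ℝ) else 0) - (if o N.1 = N.2 then 1 else 0))
        - ((if N.2 = y then (1:ℝ) else 0) - (if o N.1 = y then 1 else 0)) := by
      rw [if_pos rfl, if_neg h1, if_neg h2]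
      split_ifs <;> norm_num
    have heN : 0 < Real.exp (-‖N.1 - x'‖ ^ 2 / (2 * σ ^ 2)) := Real.exp_pos _
    nlinarith [mul_le_mul_of_nonneg_right hcN heN.le]
  by_cases hE : (P.erase N).Nonempty
  · -- other points exist
    set D : ℝ := ‖N.1 - x'‖ ^ 2 with hD
    set m : ℝ := (P.erase N).inf' hE fun p => ‖p.1 - x'‖ ^ 2 with hm
    have hDm : D < m := by
      rw [hm, Finset.lt_inf'_iff]
      intro p hp
      have hpP := Finset.mem_of_mem_erase hp
      have hne : p ≠ N := Finset.ne_of_mem_erase hp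
      have hd := hmin p hpP hne
      have h1 : ‖N.1 - x'‖ < ‖p.1 - x'‖ := by
        rw [norm_sub_rev, norm_sub_rev p.1]
        simpa [dist_eq_norm] using hd
      exact pow_lt_pow_left₀ h1 (norm_nonneg _) two_ne_zero
    set δ : ℝ := m - D with hδdef
    have hδ : 0 < δ := by simp [hδdef]; linarith
    set K : ℝ := 2 * (P.card : ℝ) + 1 with hK
    have hcard1 : (1:ℝ) ≤ (P.card : ℝ) := by
      exact_mod_cast Finset.card_pos.mpr ⟨N, hNP⟩
    have hK1 : 1 < K := by rw [hK]; linarith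
    have hKpos : 0 < K := by linarith
    have hlogK : 0 < Real.log K := Real.log_pos hK1
    refine ⟨Real.sqrt (δ / (2 * Real.log K)), Real.sqrt_pos.mpr (by positivity),
      fun σ hσ hσ2 y hy => main σ hσ y hy ?_⟩
    have hσsq : σ ^ 2 < δ / (2 * Real.log K) := (Real.lt_sqrt hσ.le).mp hσ2
    have h2σ : 0 < 2 * σ ^ 2 := by positivity
    have hlog2 : Real.log K < δ / (2 * σ ^ 2) := by
      rw [lt_div_iff₀ h2σ]
      rw [lt_div_iff₀ (by positivity : (0:ℝ) < 2 * Real.log K)] at hσsq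
      nlinarith
    set ε : ℝ := Real.exp (-(δ / (2 * σ ^ 2))) with hε
    have hεpos : 0 < ε := Real.exp_pos _
    have hεK : ε < K⁻¹ := by
      rw [hε, ← Real.exp_log hKpos, ← Real.exp_neg]
      exact Real.exp_lt_exp.mpr (neg_lt_neg hlog2)
    set eN : ℝ := Real.exp (-D / (2 * σ ^ 2)) with heNdef
    have heN : 0 < eN := Real.exp_pos _
    have hterm : ∀ p ∈ P.erase N,
        (-2 : ℝ) * (eN * ε) ≤
        ((((if p.2 = N.2 then (1:ℝ) else 0) - (if o p.1 = N.2 then 1 else 0))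
          - ((if p.2 = y then (1:ℝ) else 0) - (if o p.1 = y then 1 else 0)))
         * Real.exp (-‖p.1 - x'‖ ^ 2 / (2 * σ ^ 2))) := by
      intro p hp
      have hmp : m ≤ ‖p.1 - x'‖ ^ 2 := Finset.inf'_le _ hp
      have hexp : Real.exp (-‖p.1 - x'‖ ^ 2 / (2 * σ ^ 2)) ≤ eN * ε := by
        rw [heNdef, hε, ← Real.exp_add]
        apply Real.exp_le_exp.mpr
        rw [show -D / (2*σ^2) + -(δ/(2*σ^2)) = (-D + -δ)/(2*σ^2) by ring]
        gcongr
        linarith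
      have hc : (-2 : ℝ) ≤ (((if p.2 = N.2 then (1:ℝ) else 0) - (if o p.1 = N.2 then 1 else 0))
          - ((if p.2 = y then (1:ℝ) else 0) - (if o p.1 = y then 1 else 0))) := by
        split_ifs <;> norm_num
      have hc' : (((if p.2 = N.2 then (1:ℝ) else 0) - (if o p.1 = N.2 then 1 else 0))
          - ((if p.2 = y then (1:ℝ) else 0) - (if o p.1 = y then 1 else 0))) ≤ 2 := by
        split_ifs <;> norm_num
      nlinarith [Real.exp_pos (-‖p.1 - x'‖ ^ 2 / (2 * σ ^ 2))]
    have hsum := Finset.card_nsmul_le_sum _ _ _ hterm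
    rw [nsmul_eq_mul] at hsum
    have hcard : ((P.erase N).card : ℝ) ≤ (P.card : ℝ) :=
      Nat.cast_le.mpr (Finset.card_le_card (Finset.erase_subset _ _))
    have hsmall : 2 * ((P.erase N).card : ℝ) * ε < 1 := by
      have h1 : 2 * ((P.erase N).card : ℝ) * ε ≤ 2 * (P.card : ℝ) * ε := by nlinarith
      have h2 : 2 * (P.card : ℝ) * ε < K * ε := by
        apply mul_lt_mul_of_pos_right _ hεpos
        rw [hK]; linarith
      have h3 : K * ε < K * K⁻¹ := mul_lt_mul_of_pos_left hεK hKpos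
      rw [mul_inv_cancel₀ (ne_of_gt hKpos)] at h3
      linarith
    have : -(eN) < ((P.erase N).card : ℝ) * (-2 * (eN * ε)) := by nlinarith
    calc -(Real.exp (-‖N.1 - x'‖ ^ 2 / (2 * σ ^ 2))) = -(eN) := by rw [heNdef, hD]
      _ < _ := lt_of_lt_of_le this hsum
  · -- P = {N}
    refine ⟨1, one_pos, fun σ hσ _ y hy => main σ hσ y hy ?_⟩
    rw [Finset.not_nonempty_iff_eq_empty.mp hE, Finset.sum_empty]
    exact neg_neg_of_pos (Real.exp_pos _)
end
end
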